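/- For a ≥ arcosh(√(3+√5)/2) and t ≥ 0, one has √5·cosh(a+t) ≤ cosh(3a+t). -/

import Mathlib

open Real

noncomputable def arcosh (x : ℝ) : ℝ := Real.log (x + Real.sqrt (x^2 - 1))

theorem sqrt_five_cosh_le (a t : ℝ)
    (ha : _root_.arcosh (Real.sqrt (3 + Real.sqrt 5) / 2) ≤ a) (ht : 0 ≤ t) :
    Real.sqrt 5 * Real.cosh (a+t) ≤ Real.cosh (3*a+t) := by
  have h5 : (0:ℝ) ≤ Real.sqrt 5 := Real.sqrt_nonneg 5
  have h51 : (1:ℝ) ≤ Real.sqrt 5 := by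
    rw [show (1:ℝ) = Real.sqrt 1 by simp]
    exact Real.sqrt_le_sqrt (by norm_num)
  set x : ℝ := Real.sqrt (3 + Real.sqrt 5) / 2 with hxdef
  have hx2 : x ^ 2 = (3 + Real.sqrt 5) / 4 := by
    rw [hxdef, div_pow, Real.sq_sqrt (by positivity)]
    ring
  have hx1 : 1 ≤ x := by
    nlinarith [Real.sqrt_nonneg (3 + Real.sqrt 5), hx2]
  -- compute cosh (arcosh x) = x
  have hs : Real.sqrt (x^2 - 1) ^ 2 = x^2 - 1 := Real.sq_sqrt (by nlinarith)
  have hu1 : (1:ℝ) ≤ x + Real.sqrt (x^2 - 1) := le_add_of_le_of_nonneg hx1 (Real.sqrt_nonneg _)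
  have hu0 : (0:ℝ) < x + Real.sqrt (x^2 - 1) := lt_of_lt_of_le one_pos hu1
  have hcar : Real.cosh (_root_.arcosh x) = x := by
    rw [_root_.arcosh, Real.cosh_log hu0]
    have hinv : (x + Real.sqrt (x^2 - 1))⁻¹ = x - Real.sqrt (x^2 - 1) := by
      exact inv_eq_of_mul_eq_one_right (by nlinarith)
    rw [hinv]; ring
  have har0 : 0 ≤ _root_.arcosh x := by
    rw [_root_.arcosh]
    exact Real.log_nonneg hu1
  have ha0 : 0 ≤ a := le_trans har0 ha
  have hca : x ≤ Real.cosh a := by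
    rw [← hcar]
    exact Real.cosh_le_cosh.2 (by rwa [abs_of_nonneg har0, abs_of_nonneg ha0])
  have hc1 : 1 ≤ Real.cosh a := le_trans hx1 hca
  have hkey : Real.sqrt 5 ≤ 4 * Real.cosh a ^ 2 - 3 := by
    nlinarith [hca, hx2, hx1]
  have hsa : 0 ≤ Real.sinh a := Real.sinh_nonneg_iff.2 ha0
  have hs2 : Real.sinh a ^ 2 = Real.cosh a ^ 2 - 1 := by
    have := Real.cosh_sq_sub_sinh_sq a; nlinarith
  have hc3 : Real.sqrt 5 * Real.cosh a ≤ Real.cosh (3*a) := by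
    rw [Real.cosh_three_mul]
    nlinarith
  have hs3 : Real.sqrt 5 * Real.sinh a ≤ Real.sinh (3*a) := by
    rw [Real.sinh_three_mul]
    nlinarith
  have hct : (0:ℝ) < Real.cosh t := Real.cosh_pos t
  have hst : 0 ≤ Real.sinh t := Real.sinh_nonneg_iff.2 ht
  rw [Real.cosh_add, Real.cosh_add]
  calc Real.sqrt 5 * (Real.cosh a * Real.cosh t + Real.sinh a * Real.sinh t)
      = (Real.sqrt 5 * Real.cosh a) * Real.cosh t + (Real.sqrt 5 * Real.sinh a) * Real.sinh t := by ring
    _ ≤ Real.cosh (3*a) * Real.cosh t + Real.sinh (3*a) * Real.sinh t := by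
        gcongr
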